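/- Let h : ℝⁿ → ℝ be differentiable with L-Lipschitz continuous gradient (L > 0) and strongly quasiconvex with modulus γ > 0, with global minimizer x̄. Then h satisfies the Polyak–Łojasiewicz inequality ‖∇h(x)‖² ≥ (γ²/(2L))(h(x) - h(x̄)) for all x ∈ ℝⁿ. -/

import Mathlib

open Filter Topology intervalIntegral

lemma line_hasDerivAt {n : ℕ} (h : EuclideanSpace ℝ (Fin n) → ℝ)
    (g : EuclideanSpace ℝ (Fin n) → EuclideanSpace ℝ (Fin n))
    (hgrad : ∀ x, HasGradientAt h (g x) x)
    (a d : EuclideanSpace ℝ (Fin n)) (t : ℝ) :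
    HasDerivAt (fun s : ℝ => h (a + s • d)) (inner ℝ (g (a + t • d)) d : ℝ) t := by
  have hline : HasDerivAt (fun s : ℝ => a + s • d) d t := by
    simpa using ((hasDerivAt_id t).smul_const d).const_add a
  have hF := hasGradientAt_iff_hasFDerivAt.mp (hgrad (a + t • d))
  have := hF.comp_hasDerivAt t hline
  simpa [InnerProductSpace.toDual_apply_apply, Function.comp_def] using this

set_option maxHeartbeats 1000000 in
theorem PL_inequality_of_strongly_quasiconvex
    {n : ℕ} (h : EuclideanSpace ℝ (Fin n) → ℝ)
    (g : EuclideanSpace ℝ (Fin n) → EuclideanSpace ℝ (Fin n))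
    (hgrad : ∀ x, HasGradientAt h (g x) x)
    (L : ℝ) (hL : 0 < L) (hLip : ∀ x y, ‖g x - g y‖ ≤ L * ‖x - y‖)
    (γ : ℝ) (hγ : 0 < γ)
    (hsq : ∀ x y : EuclideanSpace ℝ (Fin n), ∀ lam : ℝ, lam ∈ Set.Icc (0:ℝ) 1 →
      h (lam • y + (1 - lam) • x) ≤
        max (h y) (h x) - lam * (1 - lam) * (γ / 2) * ‖x - y‖ ^ 2)
    (xbar : EuclideanSpace ℝ (Fin n)) (hmin : ∀ x, h xbar ≤ h x) :
    ∀ x, γ ^ 2 / (2 * L) * (h x - h xbar) ≤ ‖g x‖ ^ 2 := by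
  -- g is continuous
  have hgc : Continuous g := by
    have : LipschitzWith (Real.toNNReal L) g := by
      apply LipschitzWith.of_dist_le_mul
      intro x y
      simpa [dist_eq_norm, Real.coe_toNNReal L hL.le] using hLip x y
    exact this.continuous
  -- gradient vanishes at the minimizer
  have hg0 : g xbar = 0 := by
    have hloc : IsLocalMin h xbar := Filter.Eventually.of_forall (fun y => hmin y)
    have hf0 := hloc.hasFDerivAt_eq_zero (hasGradientAt_iff_hasFDerivAt.mp (hgrad xbar))
    have : (inner ℝ (g xbar) (g xbar) : ℝ) = 0 := by
      have := congrArg (fun f : (EuclideanSpace ℝ (Fin n)) →L[ℝ] ℝ => f (g xbar)) hf0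
      simpa [InnerProductSpace.toDual_apply_apply] using this
    exact inner_self_eq_zero.mp this
  intro x
  set d : EuclideanSpace ℝ (Fin n) := x - xbar with hd
  set r : ℝ := ‖x - xbar‖ with hr
  have hr0 : 0 ≤ r := norm_nonneg _
  -- Step 1: descent-type bound  h x - h xbar ≤ (L/2) r^2
  have hdesc : h x - h xbar ≤ L / 2 * r ^ 2 := by
    have hcont : Continuous fun t : ℝ => (inner ℝ (g (xbar + t • d)) d : ℝ) := by
      exact Continuous.inner (hgc.comp (by continuity)) continuous_const
    have hint : (∫ t in (0:ℝ)..1, (inner ℝ (g (xbar + t • d)) d : ℝ))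
        = h (xbar + (1:ℝ) • d) - h (xbar + (0:ℝ) • d) := by
      exact intervalIntegral.integral_eq_sub_of_hasDerivAt
        (f := fun t : ℝ => h (xbar + t • d))
        (fun t _ => line_hasDerivAt h g hgrad xbar d t)
        (hcont.intervalIntegrable 0 1)
    have hpt : ∀ t ∈ Set.Icc (0:ℝ) 1,
        (inner ℝ (g (xbar + t • d)) d : ℝ) ≤ L * r ^ 2 * t := by
      intro t ht
      have h1 : (inner ℝ (g (xbar + t • d)) d : ℝ) ≤ ‖g (xbar + t • d)‖ * ‖d‖ :=
        real_inner_le_norm _ _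
      have h2 : ‖g (xbar + t • d)‖ = ‖g (xbar + t • d) - g xbar‖ := by rw [hg0, sub_zero]
      have h3 : ‖g (xbar + t • d) - g xbar‖ ≤ L * ‖(xbar + t • d) - xbar‖ := hLip _ _
      have h4 : ‖(xbar + t • d) - xbar‖ = t * ‖d‖ := by
        rw [add_sub_cancel_left, norm_smul, Real.norm_eq_abs, abs_of_nonneg ht.1]
      have hdnorm : ‖d‖ = r := by rw [hd, hr]
      calc (inner ℝ (g (xbar + t • d)) d : ℝ) ≤ ‖g (xbar + t • d)‖ * ‖d‖ := h1
        _ ≤ (L * (t * ‖d‖)) * ‖d‖ := by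
            rw [h2]; exact mul_le_mul_of_nonneg_right (h4 ▸ h3) (norm_nonneg d)
        _ = L * r ^ 2 * t := by rw [hdnorm]; ring
    have hmono : (∫ t in (0:ℝ)..1, (inner ℝ (g (xbar + t • d)) d : ℝ))
        ≤ ∫ t in (0:ℝ)..1, L * r ^ 2 * t := by
      apply intervalIntegral.integral_mono_on (by norm_num)
        (hcont.intervalIntegrable 0 1)
        ((continuous_const.mul continuous_id).intervalIntegrable 0 1)
      exact hpt
    have hval : (∫ t in (0:ℝ)..1, L * r ^ 2 * t) = L / 2 * r ^ 2 := by
      rw [intervalIntegral.integral_const_mul]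
      simp [integral_id]
      ring
    have hend : xbar + (1:ℝ) • d = x := by rw [hd]; abel_nf; module
    have hstart : xbar + (0:ℝ) • d = xbar := by simp
    rw [hint, hend, hstart] at hmono
    linarith [hmono, hval ▸ hmono]
  -- Step 2: first-order consequence of strong quasiconvexity
  have hfo : (γ / 2) * r ^ 2 ≤ ‖g x‖ * r := by
    set D : ℝ := inner ℝ (g x) (xbar - x) with hD
    have hψ : HasDerivAt (fun lam : ℝ => h (x + lam • (xbar - x))) D 0 := by
      have := line_hasDerivAt h g hgrad x (xbar - x) 0
      simpa using this
    have hslope : Tendsto (slope (fun lam : ℝ => h (x + lam • (xbar - x))) 0)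
        (𝓝[>] (0:ℝ)) (𝓝 D) :=
      ((hasDerivAt_iff_tendsto_slope.mp hψ).mono_left
        (nhdsWithin_mono 0 (fun t ht => ne_of_gt ht)))
    have hrhs : Tendsto (fun t : ℝ => -((1 - t) * (γ / 2) * r ^ 2))
        (𝓝[>] (0:ℝ)) (𝓝 (-(γ / 2 * r ^ 2))) := by
      apply Tendsto.mono_left _ nhdsWithin_le_nhds
      have : Continuous fun t : ℝ => -((1 - t) * (γ / 2) * r ^ 2) := by fun_prop
      have := this.tendsto 0
      simpa using this
    have hev : ∀ᶠ t in 𝓝[>] (0:ℝ),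
        slope (fun lam : ℝ => h (x + lam • (xbar - x))) 0 t
          ≤ -((1 - t) * (γ / 2) * r ^ 2) := by
      filter_upwards [Ioc_mem_nhdsGT_of_mem (Set.mem_Ico.mpr ⟨le_refl 0, one_pos⟩)]
        with t ht
      have hpoint : x + t • (xbar - x) = t • xbar + (1 - t) • x := by module
      have hq := hsq x xbar t ⟨ht.1.le, ht.2⟩
      rw [max_eq_right (hmin x)] at hq
      have hv : h (x + t • (xbar - x)) - h (x + (0:ℝ) • (xbar - x))
          ≤ -(t * (1 - t) * (γ / 2) * r ^ 2) := by
        rw [hpoint]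
        simp only [zero_smul, add_zero]
        have : ‖x - xbar‖ ^ 2 = r ^ 2 := by rw [hr]
        rw [this] at hq
        linarith
      rw [slope_def_field, sub_zero, div_le_iff₀ ht.1]
      nlinarith [hv]
    have hDle : D ≤ -(γ / 2 * r ^ 2) := le_of_tendsto_of_tendsto hslope hrhs hev
    have hcs : (inner ℝ (g x) (x - xbar) : ℝ) ≤ ‖g x‖ * ‖x - xbar‖ :=
      real_inner_le_norm _ _
    have hneg : (inner ℝ (g x) (x - xbar) : ℝ) = -D := by
      rw [hD, ← inner_neg_right]; congr 1; abel
    rw [hneg] at hcs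
    rw [← hr] at hcs
    linarith
  -- Step 3: combine
  have hG0 : (0:ℝ) ≤ ‖g x‖ := norm_nonneg _
  have hG2 : γ ^ 2 * r ^ 2 ≤ 4 * ‖g x‖ ^ 2 := by
    nlinarith [sq_nonneg (2 * ‖g x‖ - γ * r), mul_le_mul_of_nonneg_left hfo
      (by positivity : (0:ℝ) ≤ 4 * γ)]
  rw [div_mul_eq_mul_div, div_le_iff₀ (by positivity : (0:ℝ) < 2 * L)]
  nlinarith [mul_le_mul_of_nonneg_left hdesc (sq_nonneg γ),
    mul_le_mul_of_nonneg_left hG2 (by positivity : (0:ℝ) ≤ L / 2)]
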